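/- The linear map Φ : S(d,F) ⊕ S(d,F) → M(d,F) defined by Φ(X,Y)_{i,j} = X_{i,j} + Y_{i, (j mod d) + 1} (where Y is indexed symmetrically) is surjective for every field F and every d ≥ 1. -/

import Mathlib

open Matrix Finset
open Fin.CommRing

private def gFun {F : Type*} [Field F] {d : ℕ} [NeZero d]
    (M : Matrix (Fin d) (Fin d) F) (s : Fin d) (k : ℕ) : F :=
  M (k : Fin d) (s - (k : Fin d)) - M (s - (k : Fin d)) (k : Fin d)

private lemma key_cancel {F : Type*} [Field F] {d : ℕ} [NeZero d]
    (M : Matrix (Fin d) (Fin d) F) (a b m : ℕ) (hb : b ≤ d)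
    (hm : a + b = m + 1) :
    ∑ k ∈ Finset.Ico a b, gFun M (m : Fin d) k = 0 := by
  apply Finset.sum_involution (fun k _ => m - k)
  · intro k hk
    simp only [Finset.mem_Ico] at hk
    have hkm : k ≤ m := by omega
    have hc : ((m - k : ℕ) : Fin d) = (m : Fin d) - (k : Fin d) := Nat.cast_sub hkm
    simp only [gFun, hc, sub_sub_cancel]
    ring
  · intro k hk hne heq
    simp only [Finset.mem_Ico] at hk
    have hkm : k ≤ m := by omega
    have hc : ((m - k : ℕ) : Fin d) = (m : Fin d) - (k : Fin d) := Nat.cast_sub hkm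
    rw [heq] at hc
    apply hne
    simp only [gFun, ← hc]
    ring
  · intro k hk
    simp only [Finset.mem_Ico] at hk ⊢
    omega
  · intro k hk
    simp only [Finset.mem_Ico] at hk
    omega

private lemma lineSum_eq {F : Type*} [Field F] {d : ℕ} [NeZero d]
    (M : Matrix (Fin d) (Fin d) F) (s : Fin d) (a b : ℕ) (hab : a ≤ b) (hb : b ≤ d)
    (hs : ((a + b : ℕ) : Fin d) = s + 1) :
    ∑ k ∈ Finset.range a, gFun M s k = ∑ k ∈ Finset.range b, gFun M s k := by
  rcases eq_or_lt_of_le hab with rfl | hlt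
  · rfl
  · have h1 : 1 ≤ a + b := by omega
    have hm : a + b = (a + b - 1) + 1 := by omega
    have hcast : ((a + b - 1 : ℕ) : Fin d) = s := by
      have : ((a + b - 1 : ℕ) : Fin d) = ((a + b : ℕ) : Fin d) - 1 := by
        rw [Nat.cast_sub h1, Nat.cast_one]
      rw [this, hs, add_sub_cancel_right]
    have key := key_cancel M a b (a + b - 1) hb hm
    rw [hcast] at key
    rw [← Finset.sum_range_add_sum_Ico _ hab, key, add_zero]

private lemma lineSum_step {F : Type*} [Field F] {d : ℕ} [NeZero d]
    (M : Matrix (Fin d) (Fin d) F) (i j : Fin d) (h : i.val < j.val) :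
    ∑ k ∈ Finset.range j.val, gFun M (i + j) k
      = ∑ k ∈ Finset.range i.val, gFun M (i + j) k + (M i j - M j i) := by
  have hb : j.val ≤ d := le_of_lt j.isLt
  have hm : (i.val + 1) + j.val = (i.val + j.val) + 1 := by omega
  have hcast : ((i.val + j.val : ℕ) : Fin d) = i + j := by
    push_cast
    rfl
  have key := key_cancel M (i.val + 1) j.val (i.val + j.val) hb hm
  rw [hcast] at key
  have hsplit : ∑ k ∈ Finset.range j.val, gFun M (i + j) k
      = ∑ k ∈ Finset.range i.val, gFun M (i + j) k
        + ∑ k ∈ Finset.Ico i.val j.val, gFun M (i + j) k := by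
    rw [Finset.sum_range_add_sum_Ico _ (le_of_lt h)]
  rw [hsplit, Finset.sum_eq_sum_Ico_succ_bot h, key, add_zero]
  congr 1
  simp only [gFun, Fin.cast_val_eq_self, add_sub_cancel_left]

theorem shifted_sum_of_symmetric_matrices_surjective
    {F : Type*} [Field F] {d : ℕ} [NeZero d]
    (M : Matrix (Fin d) (Fin d) F) :
    ∃ X Y : Matrix (Fin d) (Fin d) F, X.IsSymm ∧ Y.IsSymm ∧
      ∀ i j, M i j = X i j + Y i (j + 1) := by
  set Z : Matrix (Fin d) (Fin d) F :=
    fun i j => -∑ k ∈ Finset.range i.val, gFun M (i + j) k with hZ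
  refine ⟨M - Z, fun i j => Z i (j - 1), ?_, ?_, ?_⟩
  · -- X symmetric
    rw [Matrix.IsSymm]
    ext i j
    simp only [Matrix.transpose_apply, Matrix.sub_apply]
    simp only [hZ]
    rcases lt_trichotomy j.val i.val with h | h | h
    · have := lineSum_step M j i h
      rw [add_comm j i] at this
      rw [this]
      ring
    · have : j = i := Fin.ext h
      subst this
      ring
    · have := lineSum_step M i j h
      rw [add_comm i j] at this
      rw [this]
      ring
  · -- Y symmetric
    unfold Matrix.IsSymm
    ext i j
    show Z j (i - 1) = Z i (j - 1)
    simp only [hZ]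
    have hline : j + (i - 1) = i + (j - 1) := by ring
    rw [hline]
    rcases le_total j.val i.val with h | h
    · congr 1
      apply lineSum_eq M _ _ _ h (le_of_lt i.isLt)
      push_cast
      ring
    · congr 1
      symm
      apply lineSum_eq M _ _ _ h (le_of_lt j.isLt)
      push_cast
      ring
  · intro i j
    simp only [Matrix.sub_apply]
    simp only [hZ, add_sub_cancel_right]
    ring
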